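/- Under the (P1') attack constraints, the score of any deterministic policy π under the poisoned reward R̂ satisfies ρ̂^π ≤ ρ̂^{π†}; moreover if π ≠ π† then ρ̂^π ≤ ρ̂^{π†} - ε†·(1-γ)·μ_min, where μ_min = min_{π,s} μ^π(s) — in particular π† is the unique optimal deterministic policy under R̂. -/

import Mathlib

open scoped BigOperators

structure MDP (S A : Type) [Fintype S] [Fintype A] where
  P : S → A → S → ℝ
  σ : S → ℝ
  γ : ℝ
  P_nonneg : ∀ s a s', 0 ≤ P s a s'
  P_sum : ∀ s a, ∑ s', P s a s' = 1
  σ_nonneg : ∀ s, 0 ≤ σ s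
  σ_sum : ∑ s, σ s = 1
  γ_nonneg : 0 ≤ γ
  γ_lt_one : γ < 1

variable {S A : Type} [Fintype S] [Fintype A]

/-- A stochastic stationary policy: `π s a` is the probability of action `a` in state `s`. -/
def isPolicy (π : S → A → ℝ) : Prop :=
  (∀ s a, 0 ≤ π s a) ∧ ∀ s, ∑ a, π s a = 1

/-- `saDist M π t s a` is the probability that `(s_{t+1}, a_{t+1}) = (s, a)`
(time indexed from 1 in the paper, from 0 here) under policy `π`. -/
def saDist (M : MDP S A) (π : S → A → ℝ) : ℕ → S → A → ℝ
  | 0 => fun s a => M.σ s * π s a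
  | t + 1 => fun s a => (∑ s', ∑ a', saDist M π t s' a' * M.P s' a' s) * π s a

/-- Discounted state-action occupancy measure
`ψ^π(s,a) = E[(1-γ) Σ_{t≥1} γ^{t-1} 1{s_t=s, a_t=a}]`. -/
noncomputable def occ (M : MDP S A) (π : S → A → ℝ) (s : S) (a : A) : ℝ :=
  (1 - M.γ) * ∑' t : ℕ, M.γ ^ t * saDist M π t s a

/-- Inner product of two `|S|·|A|`-dimensional vectors. -/
def dot (ψ R : S → A → ℝ) : ℝ := ∑ s, ∑ a, ψ s a * R s a

/-- The score `ρ^π = ⟨ψ^π, R⟩`. -/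
noncomputable def score (M : MDP S A) (π : S → A → ℝ) (R : S → A → ℝ) : ℝ :=
  dot (occ M π) R

/-- `stDist M π t s` is the probability that `s_{t+1} = s`. -/
def stDist (M : MDP S A) (π : S → A → ℝ) : ℕ → S → ℝ
  | 0 => M.σ
  | t + 1 => fun s => ∑ s', ∑ a', stDist M π t s' * π s' a' * M.P s' a' s

/-- Discounted state occupancy measure `μ^π(s) = E[(1-γ) Σ_{t≥1} γ^{t-1} 1{s_t=s}]`. -/
noncomputable def stateOcc (M : MDP S A) (π : S → A → ℝ) (s : S) : ℝ :=
  (1 - M.γ) * ∑' t : ℕ, M.γ ^ t * stDist M π t s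

/-- The stochastic policy corresponding to a deterministic policy `d : S → A`. -/
def detPol [DecidableEq A] (d : S → A) : S → A → ℝ :=
  fun s a => if a = d s then 1 else 0

/-- The neighbor policy `π†{s;a}`, following `a ≠ π†(s)` in `s` and `π†` elsewhere. -/
def neighbor [DecidableEq S] (πd : S → A) (s : S) (a : A) : S → A :=
  fun s' => if s' = s then a else πd s'

namespace PDL

/-- distributions on states -/
def IsDist (ν : S → ℝ) : Prop := (∀ s, 0 ≤ ν s) ∧ ∑ s, ν s = 1

def traj (M : MDP S A) (π : S → A → ℝ) (ν : S → ℝ) : ℕ → S → A → ℝ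
  | 0 => fun s a => ν s * π s a
  | t + 1 => fun s a => (∑ s', ∑ a', traj M π ν t s' a' * M.P s' a' s) * π s a

lemma traj_saDist (M : MDP S A) (π : S → A → ℝ) : ∀ t, traj M π M.σ t = saDist M π t
  | 0 => rfl
  | t + 1 => by
      show (fun s a => (∑ s', ∑ a', traj M π M.σ t s' a' * M.P s' a' s) * π s a) = _
      rw [traj_saDist M π t]; rfl

lemma traj_nonneg {M : MDP S A} {π : S → A → ℝ} {ν : S → ℝ} (hν : ∀ s, 0 ≤ ν s)
    (hπ : isPolicy π) : ∀ t s a, 0 ≤ traj M π ν t s a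
  | 0, s, a => mul_nonneg (hν s) (hπ.1 s a)
  | t + 1, s, a => by
      refine mul_nonneg (Finset.sum_nonneg fun s' _ => Finset.sum_nonneg fun a' _ => ?_) (hπ.1 s a)
      exact mul_nonneg (traj_nonneg hν hπ t s' a') (M.P_nonneg s' a' s)

lemma traj_sum {M : MDP S A} {π : S → A → ℝ} {ν : S → ℝ} (hν : IsDist ν)
    (hπ : isPolicy π) : ∀ t, ∑ s, ∑ a, traj M π ν t s a = 1
  | 0 => by
      simp only [traj, ← Finset.mul_sum]
      simp [hπ.2, hν.2]
  | t + 1 => by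
      have h1 : ∀ s : S, ∑ a, (∑ s', ∑ a', traj M π ν t s' a' * M.P s' a' s) * π s a
          = ∑ s', ∑ a', traj M π ν t s' a' * M.P s' a' s := fun s => by
        rw [← Finset.mul_sum, hπ.2, mul_one]
      calc ∑ s, ∑ a, traj M π ν (t + 1) s a
          = ∑ s, ∑ s', ∑ a', traj M π ν t s' a' * M.P s' a' s := by
            simp only [traj]; exact Finset.sum_congr rfl fun s _ => h1 s
        _ = ∑ s', ∑ a', ∑ s, traj M π ν t s' a' * M.P s' a' s := by
            rw [Finset.sum_comm]; exact Finset.sum_congr rfl fun s' _ => Finset.sum_comm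
        _ = ∑ s', ∑ a', traj M π ν t s' a' := by
            simp only [← Finset.mul_sum, M.P_sum, mul_one]
        _ = 1 := traj_sum hν hπ t

lemma traj_le_one {M : MDP S A} {π : S → A → ℝ} {ν : S → ℝ} (hν : IsDist ν)
    (hπ : isPolicy π) (t : ℕ) (s : S) (a : A) : traj M π ν t s a ≤ 1 := by
  have h := traj_sum (M := M) hν hπ t
  calc traj M π ν t s a ≤ ∑ a', traj M π ν t s a' :=
        Finset.single_le_sum (fun a' _ => traj_nonneg hν.1 hπ t s a') (Finset.mem_univ a)
    _ ≤ ∑ s', ∑ a', traj M π ν t s' a' :=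
        Finset.single_le_sum
          (fun s' _ => Finset.sum_nonneg fun a' _ => traj_nonneg hν.1 hπ t s' a')
          (Finset.mem_univ s)
    _ = 1 := h

def dlt [DecidableEq S] (s0 : S) : S → ℝ := fun s => if s = s0 then 1 else 0

lemma dlt_isDist [DecidableEq S] (s0 : S) : IsDist (S := S) (dlt s0) :=
  ⟨fun s => by unfold dlt; split <;> norm_num, by simp [dlt]⟩

lemma traj_lin [DecidableEq S] {M : MDP S A} {π : S → A → ℝ} (ν : S → ℝ) :
    ∀ (t : ℕ) (s : S) (a : A), traj M π ν t s a = ∑ s0, ν s0 * traj M π (dlt s0) t s a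
  | 0, s, a => by
      simp only [traj, dlt, ite_mul, one_mul, zero_mul, mul_ite, mul_zero]
      rw [Finset.sum_ite_eq Finset.univ s (fun s0 => ν s0 * π s a)]
      simp
  | t + 1, s, a => by
      show (∑ s', ∑ a', traj M π ν t s' a' * M.P s' a' s) * π s a
          = ∑ s0, ν s0 * traj M π (dlt s0) (t + 1) s a
      have h1 : ∑ s', ∑ a', traj M π ν t s' a' * M.P s' a' s
          = ∑ s0, ν s0 * ∑ s', ∑ a', traj M π (dlt s0) t s' a' * M.P s' a' s := by
        calc ∑ s', ∑ a', traj M π ν t s' a' * M.P s' a' s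
            = ∑ s', ∑ a', ∑ s0, ν s0 * (traj M π (dlt s0) t s' a' * M.P s' a' s) := by
              refine Finset.sum_congr rfl fun s' _ => Finset.sum_congr rfl fun a' _ => ?_
              rw [traj_lin ν t s' a', Finset.sum_mul]
              exact Finset.sum_congr rfl fun s0 _ => by ring
          _ = ∑ s', ∑ s0, ∑ a', ν s0 * (traj M π (dlt s0) t s' a' * M.P s' a' s) :=
              Finset.sum_congr rfl fun s' _ => Finset.sum_comm
          _ = ∑ s0, ∑ s', ∑ a', ν s0 * (traj M π (dlt s0) t s' a' * M.P s' a' s) :=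
              Finset.sum_comm
          _ = ∑ s0, ν s0 * ∑ s', ∑ a', traj M π (dlt s0) t s' a' * M.P s' a' s := by
              simp only [← Finset.mul_sum]
      rw [h1, Finset.sum_mul]
      exact Finset.sum_congr rfl fun s0 _ => by simp only [traj]; ring

def push (M : MDP S A) (π : S → A → ℝ) (ν : S → ℝ) : S → ℝ :=
  fun s => ∑ s0, ∑ a0, ν s0 * π s0 a0 * M.P s0 a0 s

lemma push_isDist {M : MDP S A} {π : S → A → ℝ} {ν : S → ℝ} (hν : IsDist ν)
    (hπ : isPolicy π) : IsDist (push M π ν) := by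
  constructor
  · intro s
    exact Finset.sum_nonneg fun s0 _ => Finset.sum_nonneg fun a0 _ =>
      mul_nonneg (mul_nonneg (hν.1 s0) (hπ.1 s0 a0)) (M.P_nonneg s0 a0 s)
  · unfold push
    rw [Finset.sum_comm]
    calc ∑ s0, ∑ s, ∑ a0, ν s0 * π s0 a0 * M.P s0 a0 s
        = ∑ s0, ∑ a0, ∑ s, ν s0 * π s0 a0 * M.P s0 a0 s :=
          Finset.sum_congr rfl fun s0 _ => Finset.sum_comm
      _ = ∑ s0, ∑ a0, ν s0 * π s0 a0 := by
          simp only [← Finset.mul_sum, M.P_sum, mul_one]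
      _ = 1 := by simp only [← Finset.mul_sum, hπ.2, mul_one, hν.2]

lemma traj_push {M : MDP S A} {π : S → A → ℝ} (ν : S → ℝ) :
    ∀ t : ℕ, traj M π ν (t + 1) = traj M π (push M π ν) t
  | 0 => by
      funext s a
      rfl
  | t + 1 => by
      funext s a
      show (∑ s', ∑ a', traj M π ν (t + 1) s' a' * M.P s' a' s) * π s a = _
      rw [traj_push ν t]
      rfl
lemma summable_aux (M : MDP S A) {g : ℕ → ℝ} {C : ℝ} (hg : ∀ t, |g t| ≤ C) :
    Summable (fun t : ℕ => M.γ ^ t * g t) := by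
  refine Summable.of_norm_bounded
    ((summable_geometric_of_lt_one M.γ_nonneg M.γ_lt_one).mul_right C) (fun t => ?_)
  rw [Real.norm_eq_abs, abs_mul, abs_pow, abs_of_nonneg M.γ_nonneg]
  exact mul_le_mul_of_nonneg_left (hg t) (pow_nonneg M.γ_nonneg t)

/-- the inner sum of `gval` -/
def inner (M : MDP S A) (π : S → A → ℝ) (R : S → A → ℝ) (ν : S → ℝ) (t : ℕ) : ℝ :=
  ∑ s, ∑ a, traj M π ν t s a * R s a

lemma inner_abs_le {M : MDP S A} {π : S → A → ℝ} {R : S → A → ℝ} {ν : S → ℝ}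
    (hν : IsDist ν) (hπ : isPolicy π) (t : ℕ) :
    |inner M π R ν t| ≤ ∑ s, ∑ a, |R s a| := by
  calc |inner M π R ν t| ≤ ∑ s, |∑ a, traj M π ν t s a * R s a| :=
        Finset.abs_sum_le_sum_abs _ _
    _ ≤ ∑ s, ∑ a, |traj M π ν t s a * R s a| :=
        Finset.sum_le_sum fun s _ => Finset.abs_sum_le_sum_abs _ _
    _ ≤ ∑ s, ∑ a, |R s a| := by
        refine Finset.sum_le_sum fun s _ => Finset.sum_le_sum fun a _ => ?_
        rw [abs_mul, abs_of_nonneg (traj_nonneg hν.1 hπ t s a)]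
        calc traj M π ν t s a * |R s a| ≤ 1 * |R s a| :=
              mul_le_mul_of_nonneg_right (traj_le_one hν hπ t s a) (abs_nonneg _)
          _ = |R s a| := one_mul _

lemma summable_inner {M : MDP S A} {π : S → A → ℝ} {R : S → A → ℝ} {ν : S → ℝ}
    (hν : IsDist ν) (hπ : isPolicy π) :
    Summable (fun t : ℕ => M.γ ^ t * inner M π R ν t) :=
  summable_aux M (inner_abs_le hν hπ)

noncomputable def gval (M : MDP S A) (π : S → A → ℝ) (R : S → A → ℝ) (ν : S → ℝ) : ℝ :=
  (1 - M.γ) * ∑' t : ℕ, M.γ ^ t * inner M π R ν t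

lemma saDist_abs_le {M : MDP S A} {π : S → A → ℝ} (hπ : isPolicy π) (t : ℕ) (s : S) (a : A) :
    |saDist M π t s a| ≤ 1 := by
  rw [← traj_saDist, abs_of_nonneg (traj_nonneg M.σ_nonneg hπ t s a)]
  exact traj_le_one ⟨M.σ_nonneg, M.σ_sum⟩ hπ t s a

lemma score_eq_gval {M : MDP S A} {π : S → A → ℝ} (hπ : isPolicy π) (R : S → A → ℝ) :
    score M π R = gval M π R M.σ := by
  have hsum : ∀ (s : S) (a : A), Summable (fun t : ℕ => M.γ ^ t * saDist M π t s a * R s a) := by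
    intro s a
    have : ∀ t : ℕ, |saDist M π t s a * R s a| ≤ |R s a| := fun t => by
      rw [abs_mul]
      calc |saDist M π t s a| * |R s a| ≤ 1 * |R s a| :=
            mul_le_mul_of_nonneg_right (saDist_abs_le hπ t s a) (abs_nonneg _)
        _ = |R s a| := one_mul _
    simpa [mul_assoc] using summable_aux M this
  unfold score dot gval inner
  calc ∑ s, ∑ a, occ M π s a * R s a
      = ∑ s, ∑ a, (1 - M.γ) * ∑' t : ℕ, M.γ ^ t * saDist M π t s a * R s a := by
        refine Finset.sum_congr rfl fun s _ => Finset.sum_congr rfl fun a _ => ?_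
        unfold occ
        rw [mul_assoc, ← tsum_mul_right]
    _ = (1 - M.γ) * ∑ s, ∑ a, ∑' t : ℕ, M.γ ^ t * saDist M π t s a * R s a := by
        simp only [Finset.mul_sum]
    _ = (1 - M.γ) * ∑' t : ℕ, ∑ s, ∑ a, M.γ ^ t * saDist M π t s a * R s a := by
        congr 1
        calc ∑ s, ∑ a, ∑' t : ℕ, M.γ ^ t * saDist M π t s a * R s a
            = ∑ s, ∑' t : ℕ, ∑ a, M.γ ^ t * saDist M π t s a * R s a :=
              Finset.sum_congr rfl fun s _ => (Summable.tsum_finsetSum (fun a _ => hsum s a)).symm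
          _ = ∑' t : ℕ, ∑ s, ∑ a, M.γ ^ t * saDist M π t s a * R s a :=
              (Summable.tsum_finsetSum (fun s _ => summable_sum (fun a _ => hsum s a))).symm
    _ = (1 - M.γ) * ∑' t : ℕ, M.γ ^ t * ∑ s, ∑ a, traj M π M.σ t s a * R s a := by
        congr 1
        refine tsum_congr fun t => ?_
        rw [Finset.mul_sum]
        refine Finset.sum_congr rfl fun s _ => ?_
        rw [Finset.mul_sum]
        refine Finset.sum_congr rfl fun a _ => ?_
        rw [traj_saDist]; ring
lemma inner_lin [DecidableEq S] {M : MDP S A} {π : S → A → ℝ} {R : S → A → ℝ} (ν : S → ℝ)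
    (t : ℕ) : inner M π R ν t = ∑ s0, ν s0 * inner M π R (dlt s0) t := by
  unfold inner
  calc ∑ s, ∑ a, traj M π ν t s a * R s a
      = ∑ s, ∑ a, ∑ s0, ν s0 * (traj M π (dlt s0) t s a * R s a) := by
        refine Finset.sum_congr rfl fun s _ => Finset.sum_congr rfl fun a _ => ?_
        rw [traj_lin ν t s a, Finset.sum_mul]
        exact Finset.sum_congr rfl fun s0 _ => by ring
    _ = ∑ s, ∑ s0, ∑ a, ν s0 * (traj M π (dlt s0) t s a * R s a) :=
        Finset.sum_congr rfl fun s _ => Finset.sum_comm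
    _ = ∑ s0, ∑ s, ∑ a, ν s0 * (traj M π (dlt s0) t s a * R s a) := Finset.sum_comm
    _ = ∑ s0, ν s0 * ∑ s, ∑ a, traj M π (dlt s0) t s a * R s a := by
        simp only [← Finset.mul_sum]

lemma gval_lin [DecidableEq S] {M : MDP S A} {π : S → A → ℝ} {R : S → A → ℝ} {ν : S → ℝ}
    (hπ : isPolicy π) : gval M π R ν = ∑ s0, ν s0 * gval M π R (dlt s0) := by
  unfold gval
  have hs : ∀ s0 : S, Summable (fun t : ℕ => ν s0 * (M.γ ^ t * inner M π R (dlt s0) t)) :=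
    fun s0 => (summable_inner (dlt_isDist s0) hπ).mul_left _
  calc (1 - M.γ) * ∑' t : ℕ, M.γ ^ t * inner M π R ν t
      = (1 - M.γ) * ∑' t : ℕ, ∑ s0, ν s0 * (M.γ ^ t * inner M π R (dlt s0) t) := by
        congr 1
        refine tsum_congr fun t => ?_
        rw [inner_lin ν t, Finset.mul_sum]
        exact Finset.sum_congr rfl fun s0 _ => by ring
    _ = (1 - M.γ) * ∑ s0, ∑' t : ℕ, ν s0 * (M.γ ^ t * inner M π R (dlt s0) t) := by
        rw [Summable.tsum_finsetSum (fun s0 _ => hs s0)]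
    _ = ∑ s0, ν s0 * ((1 - M.γ) * ∑' t : ℕ, M.γ ^ t * inner M π R (dlt s0) t) := by
        rw [Finset.mul_sum]
        refine Finset.sum_congr rfl fun s0 _ => ?_
        rw [tsum_mul_left]; ring

lemma gval_step {M : MDP S A} {π : S → A → ℝ} {R : S → A → ℝ} {ν : S → ℝ}
    (hν : IsDist ν) (hπ : isPolicy π) :
    gval M π R ν = (1 - M.γ) * (∑ s, ∑ a, ν s * π s a * R s a)
      + M.γ * gval M π R (push M π ν) := by
  unfold gval
  have h0 : ∑' t : ℕ, M.γ ^ t * inner M π R ν t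
      = inner M π R ν 0 + ∑' t : ℕ, M.γ ^ (t + 1) * inner M π R ν (t + 1) := by
    rw [Summable.tsum_eq_zero_add (summable_inner hν hπ)]
    simp
  have h1 : ∀ t : ℕ, inner M π R ν (t + 1) = inner M π R (push M π ν) t := by
    intro t; unfold inner; rw [traj_push]
  have h2 : ∑' t : ℕ, M.γ ^ (t + 1) * inner M π R ν (t + 1)
      = M.γ * ∑' t : ℕ, M.γ ^ t * inner M π R (push M π ν) t := by
    rw [← tsum_mul_left]
    refine tsum_congr fun t => ?_
    rw [h1 t]; ring
  have h3 : inner M π R ν 0 = ∑ s, ∑ a, ν s * π s a * R s a := rfl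
  rw [h0, h2, h3]; ring
omit [Fintype S] in
lemma detPol_isPolicy [DecidableEq A] (d : S → A) : isPolicy (detPol d) := by
  constructor
  · intro s a; unfold detPol; split <;> norm_num
  · intro s; simp [detPol]

section Bellman

variable [DecidableEq S] [DecidableEq A] (M : MDP S A) (πt : S → A) (Rhat : S → A → ℝ)

/-- normalized value function of the target policy -/
noncomputable def Vv (s : S) : ℝ := gval M (detPol πt) Rhat (dlt s)

/-- normalized action-value function of the target policy -/
noncomputable def Qv (s : S) (a : A) : ℝ :=
  (1 - M.γ) * Rhat s a + M.γ * ∑ s', M.P s a s' * Vv M πt Rhat s'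

lemma push_dlt (s0 : S) (d : S → A) :
    push M (detPol d) (dlt s0) = fun s => M.P s0 (d s0) s := by
  funext s
  unfold push dlt detPol
  simp [ite_mul, one_mul, zero_mul, mul_ite, mul_zero, Finset.sum_ite_eq']

lemma first_term_dlt (s0 : S) (d : S → A) (R : S → A → ℝ) :
    ∑ s, ∑ a, dlt s0 s * detPol d s a * R s a = R s0 (d s0) := by
  unfold dlt detPol
  simp [ite_mul, one_mul, zero_mul, mul_ite, mul_zero, Finset.sum_ite_eq']

lemma bellman (s0 : S) : Vv M πt Rhat s0 = Qv M πt Rhat s0 (πt s0) := by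
  unfold Vv Qv
  rw [gval_step (dlt_isDist s0) (detPol_isPolicy πt), first_term_dlt, push_dlt,
    gval_lin (detPol_isPolicy πt)]
  rfl

lemma score_target : score M (detPol πt) Rhat = ∑ s, M.σ s * Vv M πt Rhat s := by
  rw [score_eq_gval (detPol_isPolicy πt), gval_lin (detPol_isPolicy πt)]
  rfl

end Bellman

section Occ

variable {M : MDP S A} {π : S → A → ℝ}

lemma saDist_eq_stDist_mul : ∀ (t : ℕ) (s : S) (a : A),
    saDist M π t s a = stDist M π t s * π s a
  | 0, s, a => rfl
  | t + 1, s, a => by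
      show (∑ s', ∑ a', saDist M π t s' a' * M.P s' a' s) * π s a = _
      have : ∑ s', ∑ a', saDist M π t s' a' * M.P s' a' s
          = ∑ s', ∑ a', stDist M π t s' * π s' a' * M.P s' a' s := by
        refine Finset.sum_congr rfl fun s' _ => Finset.sum_congr rfl fun a' _ => ?_
        rw [saDist_eq_stDist_mul t s' a']
      rw [this]; rfl

lemma stDist_eq_sum (hπ : isPolicy π) (t : ℕ) (s : S) :
    stDist M π t s = ∑ a, saDist M π t s a := by
  simp only [saDist_eq_stDist_mul, ← Finset.mul_sum, hπ.2, mul_one]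

lemma stDist_nonneg (hπ : isPolicy π) (t : ℕ) (s : S) : 0 ≤ stDist M π t s := by
  rw [stDist_eq_sum hπ]
  refine Finset.sum_nonneg fun a _ => ?_
  rw [← traj_saDist]
  exact traj_nonneg M.σ_nonneg hπ t s a

lemma stDist_le_one (hπ : isPolicy π) (t : ℕ) (s : S) : stDist M π t s ≤ 1 := by
  rw [stDist_eq_sum hπ]
  have h := traj_sum (M := M) ⟨M.σ_nonneg, M.σ_sum⟩ hπ t
  calc ∑ a, saDist M π t s a = ∑ a, traj M π M.σ t s a := by rw [traj_saDist]
    _ ≤ ∑ s', ∑ a, traj M π M.σ t s' a :=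
        Finset.single_le_sum
          (fun s' _ => Finset.sum_nonneg fun a _ => traj_nonneg M.σ_nonneg hπ t s' a)
          (Finset.mem_univ s)
    _ = 1 := h

lemma summable_stDist (hπ : isPolicy π) (s : S) :
    Summable (fun t : ℕ => M.γ ^ t * stDist M π t s) := by
  refine summable_aux M (C := 1) fun t => ?_
  rw [abs_of_nonneg (stDist_nonneg hπ t s)]
  exact stDist_le_one hπ t s

lemma stateOcc_le_one (hπ : isPolicy π) (s : S) : stateOcc M π s ≤ 1 := by
  unfold stateOcc
  have h1γ : (0:ℝ) < 1 - M.γ := by linarith [M.γ_lt_one]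
  have h : ∑' t : ℕ, M.γ ^ t * stDist M π t s ≤ ∑' t : ℕ, M.γ ^ t := by
    refine Summable.tsum_le_tsum (fun t => ?_) (summable_stDist hπ s)
      (summable_geometric_of_lt_one M.γ_nonneg M.γ_lt_one)
    calc M.γ ^ t * stDist M π t s ≤ M.γ ^ t * 1 :=
          mul_le_mul_of_nonneg_left (stDist_le_one hπ t s) (pow_nonneg M.γ_nonneg t)
      _ = M.γ ^ t := mul_one _
  rw [tsum_geometric_of_lt_one M.γ_nonneg M.γ_lt_one] at h
  calc (1 - M.γ) * ∑' t : ℕ, M.γ ^ t * stDist M π t s ≤ (1 - M.γ) * (1 - M.γ)⁻¹ :=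
        mul_le_mul_of_nonneg_left h (le_of_lt h1γ)
    _ = 1 := mul_inv_cancel₀ (ne_of_gt h1γ)

lemma occ_eq_stateOcc_mul (s : S) (a : A) : occ M π s a = stateOcc M π s * π s a := by
  unfold occ stateOcc
  rw [mul_assoc, ← tsum_mul_right]
  congr 1
  exact tsum_congr fun t => by rw [saDist_eq_stDist_mul]; ring

lemma stateOcc_flow (hπ : isPolicy π) (s : S) :
    stateOcc M π s = (1 - M.γ) * M.σ s
      + M.γ * ∑ s', ∑ a', stateOcc M π s' * π s' a' * M.P s' a' s := by
  have hsum : ∀ s' : S, Summable (fun t : ℕ => M.γ ^ t * stDist M π t s') :=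
    summable_stDist hπ
  have h1 : ∀ t : ℕ, M.γ ^ (t + 1) * stDist M π (t + 1) s
      = ∑ s', ∑ a', M.γ * ((M.γ ^ t * stDist M π t s') * (π s' a' * M.P s' a' s)) := by
    intro t
    show M.γ ^ (t + 1) * (∑ s', ∑ a', stDist M π t s' * π s' a' * M.P s' a' s) = _
    rw [Finset.mul_sum]
    refine Finset.sum_congr rfl fun s' _ => ?_
    rw [Finset.mul_sum]
    refine Finset.sum_congr rfl fun a' _ => ?_
    rw [pow_succ]; ring
  have hsum2 : ∀ s' : S, Summable (fun t : ℕ =>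
      ∑ a', M.γ * ((M.γ ^ t * stDist M π t s') * (π s' a' * M.P s' a' s))) :=
    fun s' => summable_sum fun a' _ => (((hsum s').mul_right _).mul_left _)
  have key : ∑' t : ℕ, M.γ ^ t * stDist M π t s
      = M.σ s + M.γ * ∑ s', ∑ a',
          (∑' t : ℕ, M.γ ^ t * stDist M π t s') * (π s' a' * M.P s' a' s) := by
    calc ∑' t : ℕ, M.γ ^ t * stDist M π t s
        = M.γ ^ 0 * stDist M π 0 s + ∑' t : ℕ, M.γ ^ (t + 1) * stDist M π (t + 1) s :=
          Summable.tsum_eq_zero_add (hsum s)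
      _ = M.σ s + ∑' t : ℕ, ∑ s', ∑ a',
            M.γ * ((M.γ ^ t * stDist M π t s') * (π s' a' * M.P s' a' s)) := by
          congr 1
          · simp [stDist]
          · exact tsum_congr h1
      _ = M.σ s + ∑ s', ∑' t : ℕ, ∑ a',
            M.γ * ((M.γ ^ t * stDist M π t s') * (π s' a' * M.P s' a' s)) := by
          rw [Summable.tsum_finsetSum (fun s' _ => hsum2 s')]
      _ = M.σ s + M.γ * ∑ s', ∑ a',
            (∑' t : ℕ, M.γ ^ t * stDist M π t s') * (π s' a' * M.P s' a' s) := by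
          congr 1
          rw [Finset.mul_sum]
          refine Finset.sum_congr rfl fun s' _ => ?_
          rw [Summable.tsum_finsetSum (fun a' _ => ((hsum s').mul_right _).mul_left _), Finset.mul_sum]
          refine Finset.sum_congr rfl fun a' _ => ?_
          rw [tsum_mul_left, tsum_mul_right]
  have hB : ∑ s', ∑ a', stateOcc M π s' * π s' a' * M.P s' a' s
      = (1 - M.γ) * ∑ s', ∑ a',
          (∑' t : ℕ, M.γ ^ t * stDist M π t s') * (π s' a' * M.P s' a' s) := by
    rw [Finset.mul_sum]
    refine Finset.sum_congr rfl fun s' _ => ?_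
    rw [Finset.mul_sum]
    refine Finset.sum_congr rfl fun a' _ => ?_
    unfold stateOcc; ring
  rw [hB, stateOcc, key]; ring

end Occ
section Main

variable [DecidableEq S] [DecidableEq A] (M : MDP S A) (πt : S → A) (Rhat : S → A → ℝ)

omit [DecidableEq S] in
lemma score_det (d : S → A) (R : S → A → ℝ) :
    score M (detPol d) R = ∑ s, stateOcc M (detPol d) s * R s (d s) := by
  unfold score dot
  refine Finset.sum_congr rfl fun s _ => ?_
  calc ∑ a, occ M (detPol d) s a * R s a
      = ∑ a, stateOcc M (detPol d) s * detPol d s a * R s a := by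
        refine Finset.sum_congr rfl fun a _ => ?_
        rw [occ_eq_stateOcc_mul]
    _ = stateOcc M (detPol d) s * R s (d s) := by
        simp [detPol, mul_ite, ite_mul, Finset.sum_ite_eq']

omit [DecidableEq S] in
lemma flow_det (d : S → A) (s : S) :
    stateOcc M (detPol d) s = (1 - M.γ) * M.σ s
      + M.γ * ∑ s', stateOcc M (detPol d) s' * M.P s' (d s') s := by
  rw [stateOcc_flow (detPol_isPolicy d) s]
  congr 1
  rw [mul_eq_mul_left_iff]
  left
  refine Finset.sum_congr rfl fun s' _ => ?_
  simp [detPol, mul_ite, ite_mul, Finset.sum_ite_eq']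

lemma pdl (d : S → A) :
    (1 - M.γ) * (score M (detPol πt) Rhat - score M (detPol d) Rhat)
      = ∑ s, stateOcc M (detPol d) s
          * (Qv M πt Rhat s (πt s) - Qv M πt Rhat s (d s)) := by
  set μ := stateOcc M (detPol d) with hμdef
  have hswap : ∑ s, (∑ s', μ s' * M.P s' (d s') s) * Vv M πt Rhat s
      = ∑ s', μ s' * ∑ s, M.P s' (d s') s * Vv M πt Rhat s := by
    calc ∑ s, (∑ s', μ s' * M.P s' (d s') s) * Vv M πt Rhat s
        = ∑ s, ∑ s', μ s' * M.P s' (d s') s * Vv M πt Rhat s := by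
          refine Finset.sum_congr rfl fun s _ => ?_
          rw [Finset.sum_mul]
      _ = ∑ s', ∑ s, μ s' * M.P s' (d s') s * Vv M πt Rhat s := Finset.sum_comm
      _ = ∑ s', μ s' * ∑ s, M.P s' (d s') s * Vv M πt Rhat s := by
          refine Finset.sum_congr rfl fun s' _ => ?_
          rw [Finset.mul_sum]
          exact Finset.sum_congr rfl fun s _ => by ring
  have h1 : ∑ s, μ s * Vv M πt Rhat s
      = (1 - M.γ) * score M (detPol πt) Rhat
        + M.γ * ∑ s', μ s' * ∑ s, M.P s' (d s') s * Vv M πt Rhat s := by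
    calc ∑ s, μ s * Vv M πt Rhat s
        = ∑ s, ((1 - M.γ) * M.σ s + M.γ * ∑ s', μ s' * M.P s' (d s') s)
            * Vv M πt Rhat s := by
          refine Finset.sum_congr rfl fun s _ => ?_
          rw [hμdef, flow_det]
      _ = (1 - M.γ) * ∑ s, M.σ s * Vv M πt Rhat s
          + M.γ * ∑ s, (∑ s', μ s' * M.P s' (d s') s) * Vv M πt Rhat s := by
          rw [Finset.mul_sum, Finset.mul_sum, ← Finset.sum_add_distrib]
          refine Finset.sum_congr rfl fun s _ => ?_
          ring
      _ = (1 - M.γ) * ∑ s, M.σ s * Vv M πt Rhat s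
          + M.γ * ∑ s', μ s' * ∑ s, M.P s' (d s') s * Vv M πt Rhat s := by
          rw [hswap]
      _ = (1 - M.γ) * score M (detPol πt) Rhat
          + M.γ * ∑ s', μ s' * ∑ s, M.P s' (d s') s * Vv M πt Rhat s := by
          rw [score_target]
  have h2 : ∑ s, μ s * Qv M πt Rhat s (d s)
      = (1 - M.γ) * score M (detPol d) Rhat
        + M.γ * ∑ s', μ s' * ∑ s, M.P s' (d s') s * Vv M πt Rhat s := by
    calc ∑ s, μ s * Qv M πt Rhat s (d s)
        = ∑ s, ((1 - M.γ) * (μ s * Rhat s (d s))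
            + M.γ * (μ s * ∑ s', M.P s (d s) s' * Vv M πt Rhat s')) := by
          refine Finset.sum_congr rfl fun s _ => ?_
          unfold Qv; ring
      _ = (1 - M.γ) * ∑ s, μ s * Rhat s (d s)
          + M.γ * ∑ s, μ s * ∑ s', M.P s (d s) s' * Vv M πt Rhat s' := by
          rw [Finset.sum_add_distrib, Finset.mul_sum, Finset.mul_sum]
      _ = (1 - M.γ) * score M (detPol d) Rhat
          + M.γ * ∑ s', μ s' * ∑ s, M.P s' (d s') s * Vv M πt Rhat s := by
          rw [score_det]
  have h3 : ∑ s, μ s * (Qv M πt Rhat s (πt s) - Qv M πt Rhat s (d s))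
      = ∑ s, μ s * Vv M πt Rhat s - ∑ s, μ s * Qv M πt Rhat s (d s) := by
    rw [← Finset.sum_sub_distrib]
    refine Finset.sum_congr rfl fun s _ => ?_
    rw [← bellman]; ring
  rw [h3, h1, h2]; ring

end Main
lemma le_of_sub_mul {c x y : ℝ} (hc : 0 < c) (h : 0 ≤ c * (x - y)) : y ≤ x := by
  nlinarith

end PDL

/-- under the (P1') attack constraints with margin ε† > 0, every
deterministic policy scores no better than π† under R̂, and every other deterministic
policy is worse by at least `ε†·(1-γ)·μ_min`; in particular π† is the unique optimal
deterministic policy under R̂. -/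
theorem target_uniquely_optimal [DecidableEq S] [DecidableEq A]
    (M : MDP S A) (πt : S → A) (Rhat : S → A → ℝ) (εt μmin : ℝ) (hεt : 0 < εt)
    (herg : ∀ π : S → A → ℝ, isPolicy π → ∀ s, 0 < stateOcc M π s)
    (hμ : ∀ π : S → A → ℝ, isPolicy π → ∀ s, μmin ≤ stateOcc M π s)
    (hatt : ∀ s a, a ≠ πt s →
      score M (detPol πt) Rhat ≥ score M (detPol (neighbor πt s a)) Rhat + εt) :
    ∀ d : S → A,
      score M (detPol d) Rhat ≤ score M (detPol πt) Rhat ∧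
      (d ≠ πt →
        score M (detPol d) Rhat
          ≤ score M (detPol πt) Rhat - εt * (1 - M.γ) * μmin) := by
  have h1γ : (0:ℝ) < 1 - M.γ := by linarith [M.γ_lt_one]
  have hegap : (0:ℝ) < (1 - M.γ) * εt := mul_pos h1γ hεt
  -- the action gap is at least (1-γ)·εt at non-target actions
  have hgap_pos : ∀ s a, a ≠ πt s →
      (1 - M.γ) * εt ≤ PDL.Qv M πt Rhat s (πt s) - PDL.Qv M πt Rhat s a := by
    intro s a ha
    have hp := PDL.pdl M πt Rhat (neighbor πt s a)
    have hpol := PDL.detPol_isPolicy (neighbor πt s a)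
    have hsum : ∑ s', stateOcc M (detPol (neighbor πt s a)) s'
        * (PDL.Qv M πt Rhat s' (πt s') - PDL.Qv M πt Rhat s' (neighbor πt s a s'))
        = stateOcc M (detPol (neighbor πt s a)) s
          * (PDL.Qv M πt Rhat s (πt s) - PDL.Qv M πt Rhat s a) := by
      rw [Finset.sum_eq_single s]
      · rw [show neighbor πt s a s = a from if_pos rfl]
      · intro s' _ h
        rw [show neighbor πt s a s' = πt s' from if_neg h]
        simp
      · intro h; exact absurd (Finset.mem_univ s) h
    have hμ0pos : 0 < stateOcc M (detPol (neighbor πt s a)) s := herg _ hpol s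
    have hμ0le : stateOcc M (detPol (neighbor πt s a)) s ≤ 1 := PDL.stateOcc_le_one hpol s
    have hscore : εt ≤ score M (detPol πt) Rhat - score M (detPol (neighbor πt s a)) Rhat := by
      have := hatt s a ha; linarith
    have hkey : (1 - M.γ) * εt ≤ stateOcc M (detPol (neighbor πt s a)) s
        * (PDL.Qv M πt Rhat s (πt s) - PDL.Qv M πt Rhat s a) := by
      rw [← hsum, ← hp]
      calc (1 - M.γ) * εt
          ≤ (1 - M.γ) * (score M (detPol πt) Rhat
              - score M (detPol (neighbor πt s a)) Rhat) :=
            mul_le_mul_of_nonneg_left hscore (le_of_lt h1γ)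
        _ = _ := rfl
    nlinarith [hkey, hμ0pos, hμ0le, hegap]
  have hgap_nonneg : ∀ s a, 0 ≤ PDL.Qv M πt Rhat s (πt s) - PDL.Qv M πt Rhat s a := by
    intro s a
    by_cases h : a = πt s
    · rw [h]; simp
    · have := hgap_pos s a h; linarith
  intro d
  have hpd := PDL.pdl M πt Rhat d
  have hpold := PDL.detPol_isPolicy d
  have hterm_nonneg : ∀ s ∈ (Finset.univ : Finset S),
      0 ≤ stateOcc M (detPol d) s
        * (PDL.Qv M πt Rhat s (πt s) - PDL.Qv M πt Rhat s (d s)) :=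
    fun s _ => mul_nonneg (le_of_lt (herg _ hpold s)) (hgap_nonneg s (d s))
  have hsum_nonneg : 0 ≤ (1 - M.γ)
      * (score M (detPol πt) Rhat - score M (detPol d) Rhat) := by
    rw [hpd]; exact Finset.sum_nonneg hterm_nonneg
  have hle : score M (detPol d) Rhat ≤ score M (detPol πt) Rhat :=
    PDL.le_of_sub_mul h1γ hsum_nonneg
  refine ⟨hle, fun hne => ?_⟩
  obtain ⟨s0, hs0⟩ : ∃ s0, d s0 ≠ πt s0 := Function.ne_iff.mp hne
  have hlower : stateOcc M (detPol d) s0 * ((1 - M.γ) * εt)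
      ≤ ∑ s, stateOcc M (detPol d) s
          * (PDL.Qv M πt Rhat s (πt s) - PDL.Qv M πt Rhat s (d s)) :=
    calc stateOcc M (detPol d) s0 * ((1 - M.γ) * εt)
        ≤ stateOcc M (detPol d) s0
            * (PDL.Qv M πt Rhat s0 (πt s0) - PDL.Qv M πt Rhat s0 (d s0)) :=
          mul_le_mul_of_nonneg_left (hgap_pos s0 (d s0) hs0) (le_of_lt (herg _ hpold s0))
      _ ≤ _ := Finset.single_le_sum hterm_nonneg (Finset.mem_univ s0)
  have hμs0 := hμ (detPol d) hpold s0
  have hμpos := herg (detPol d) hpold s0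
  have hmain : εt * stateOcc M (detPol d) s0
      ≤ score M (detPol πt) Rhat - score M (detPol d) Rhat := by
    refine PDL.le_of_sub_mul h1γ ?_
    rw [← hpd] at hlower
    nlinarith [hlower]
  rcases le_or_gt μmin 0 with h0 | h0
  · have hnp : εt * (1 - M.γ) * μmin ≤ 0 :=
      mul_nonpos_of_nonneg_of_nonpos (mul_pos hεt h1γ).le h0
    linarith
  · nlinarith [hmain, hμs0, M.γ_nonneg, mul_nonneg (mul_nonneg hεt.le M.γ_nonneg) h0.le,
      mul_le_mul_of_nonneg_left hμs0 hεt.le]
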